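/- Let G be a finite abelian group of order h, p a prime not dividing h, and W a ℤ-flat commutative ring in which every prime ℓ dividing h acts invertibly (i.e., W/ℓW = 0 for all primes ℓ | h). If W is given a ℤ[G]-module structure via a ring homomorphism χ : ℤ[G] → W, then W is flat as a ℤ[G]-module. -/

import Mathlib

open TensorProduct MonoidAlgebra Finset

/-- If every prime factor of `n ≠ 0` is a unit in `W`, then `n` is a unit in `W`. -/
lemma aux_isUnit {W : Type} [CommRing W] (n : ℕ) (hn : n ≠ 0)
    (h : ∀ ℓ : ℕ, ℓ.Prime → ℓ ∣ n → IsUnit ((ℓ : ℕ) : W)) : IsUnit ((n : ℕ) : W) := by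
  induction n using Nat.strong_induction_on with
  | _ n ih =>
    rcases eq_or_ne n 1 with rfl | h1
    · simp
    · have hp : n.minFac.Prime := Nat.minFac_prime h1
      obtain ⟨m, hnm⟩ := Nat.minFac_dvd n
      have hn0 : n ≠ 0 := hn
      have hm : m ≠ 0 := by rintro rfl; rw [hnm] at hn0; simp at hn0
      have hlt : m < n := by
        rw [hnm]
        have := hp.two_le
        nlinarith [Nat.pos_of_ne_zero hm]
      have h1 : IsUnit ((n.minFac : ℕ) : W) := h _ hp (Nat.minFac_dvd n)
      have h2 : IsUnit ((m : ℕ) : W) :=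
        ih m hlt hm (fun ℓ hℓ hd => h ℓ hℓ (hd.trans ⟨n.minFac, hnm.trans (mul_comm _ _)⟩))
      rw [hnm, Nat.cast_mul]
      exact h1.mul h2

section
variable {G : Type} [CommGroup G] [Fintype G]
    {W : Type} [CommRing W] [Algebra (MonoidAlgebra ℤ G) W]

lemma aux_key (g x : G) (v w : W) :
    (of ℤ G (g * x)⁻¹) • (v * ((of ℤ G g) • w)) = (of ℤ G x⁻¹) • (v * w) := by
  rw [Algebra.smul_def, Algebra.smul_def, Algebra.smul_def]
  have h : algebraMap (MonoidAlgebra ℤ G) W (of ℤ G (g * x)⁻¹) *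
      algebraMap (MonoidAlgebra ℤ G) W (of ℤ G g) =
      algebraMap (MonoidAlgebra ℤ G) W (of ℤ G x⁻¹) := by
    rw [← map_mul, ← map_mul]
    congr 1
    group
  linear_combination (v * w) * h

/-- `MonoidAlgebra ℤ G`-linearity of the averaging section. -/
lemma aux_smul (a : MonoidAlgebra ℤ G) (v w : W) :
    (∑ g : G, (of ℤ G g) ⊗ₜ[ℤ] ((of ℤ G g⁻¹) • (v * (a • w)))) =
      a • (∑ g : G, (of ℤ G g) ⊗ₜ[ℤ] ((of ℤ G g⁻¹) • (v * w))) := by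
  induction a using MonoidAlgebra.induction_on with
  | of g =>
    rw [Finset.smul_sum]
    rw [← Equiv.sum_comp (Equiv.mulLeft g)
      (fun x => (of ℤ G x) ⊗ₜ[ℤ] ((of ℤ G x⁻¹) • (v * (of ℤ G g • w))))]
    refine Finset.sum_congr rfl fun x _ => ?_
    rw [smul_tmul']
    simp only [Equiv.coe_mulLeft]
    congr 1
    · rw [smul_eq_mul, MonoidAlgebra.of_apply, MonoidAlgebra.of_apply,
        MonoidAlgebra.of_apply, MonoidAlgebra.single_mul_single, one_mul]
    · exact aux_key g x v w
  | add f g hf hg =>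
    simp only [add_smul, mul_add, smul_add, tmul_add, Finset.sum_add_distrib, hf, hg]
  | smul r f hf =>
    have h1 : ∀ w' : W, (r • f) • w' = r • (f • w') := fun w' => smul_assoc r f w'
    simp only [h1, mul_smul_comm, smul_comm _ r, tmul_smul, ← Finset.smul_sum, smul_assoc]
    congr 1
    rw [← hf]
    exact Finset.sum_congr rfl fun x _ => by rw [mul_smul_comm]

end

/-- let `G` be finite abelian of order `h`, `p ∤ h` a prime, and `W` a
`ℤ`-flat commutative ring in which every prime `ℓ ∣ h` is invertible; if `W` is a
`ℤ[G]`-algebra (module structure via a ring homomorphism `χ`), then `W` is flat over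
`ℤ[G]`. -/
theorem stmt9 (p : ℕ) (hp : p.Prime) (G : Type) [CommGroup G] [Finite G]
    (hph : ¬ p ∣ Nat.card G)
    (W : Type) [CommRing W] [Algebra (MonoidAlgebra ℤ G) W]
    (hflat : Module.Flat ℤ W)
    (hunit : ∀ ℓ : ℕ, ℓ.Prime → ℓ ∣ Nat.card G → IsUnit (ℓ : W)) :
    Module.Flat (MonoidAlgebra ℤ G) W := by
  classical
  haveI : Fintype G := Fintype.ofFinite G
  haveI := hflat
  set A := MonoidAlgebra ℤ G with hA
  have hn0 : Nat.card G ≠ 0 := Nat.card_pos.ne'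
  obtain ⟨u, hu⟩ := aux_isUnit (W := W) (Nat.card G) hn0 hunit
  set v : W := ((u⁻¹ : Wˣ) : W) with hv
  have hvn : (Nat.card G : W) * v = 1 := by rw [← hu, hv]; exact u.mul_inv
  set μ : A ⊗[ℤ] W →ₗ[A] W := (LinearMap.id : W →ₗ[ℤ] W).liftBaseChange A with hμ
  set s : W →ₗ[A] A ⊗[ℤ] W :=
    { toFun := fun w => ∑ g : G, (of ℤ G g) ⊗ₜ[ℤ] ((of ℤ G g⁻¹) • (v * w))
      map_add' := fun w₁ w₂ => by
        simp only [mul_add, smul_add, tmul_add, Finset.sum_add_distrib]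
      map_smul' := fun a w => aux_smul a v w } with hs
  have hret : μ.comp s = LinearMap.id := by
    ext w
    simp only [LinearMap.comp_apply, LinearMap.id_apply, hs, LinearMap.coe_mk,
      AddHom.coe_mk, hμ, map_sum, LinearMap.liftBaseChange_tmul]
    have key : ∀ g : G, (of ℤ G g) • ((of ℤ G g⁻¹) • (v * w)) = v * w := by
      intro g
      rw [smul_smul, ← map_mul, mul_inv_cancel, map_one, one_smul]
    rw [Finset.sum_congr rfl fun g _ => key g, Finset.sum_const, Finset.card_univ,
      nsmul_eq_mul, ← mul_assoc, ← Nat.card_eq_fintype_card, hvn, one_mul]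
  exact Module.Flat.of_retract s μ hret
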